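/- Let m ≥ 2 and n ≥ 1 be integers, and let p₀, p₁, …, p_{2m} be unit vectors in EuclideanSpace ℝ (Fin n) with d(p₀, p_{2m}) = θ. If equality Σ_{i=0}^{2m−1} d(pᵢ, p_{i+1}) = 2mπ − θ holds (d the spherical geodesic distance), then all the points p₀, …, p_{2m} lie in a single linear subspace of dimension ≤ 2 of EuclideanSpace ℝ (Fin n), i.e. on a common great circle of S^{n-1}. -/

import Mathlib

open Real RealInnerProductSpace

section Aux

variable {F : Type*} [NormedAddCommGroup F] [InnerProductSpace ℝ F]

private lemma inner_unit_mem_Icc {a b : F} (ha : ‖a‖ = 1) (hb : ‖b‖ = 1) :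
    -1 ≤ ⟪a, b⟫ ∧ ⟪a, b⟫ ≤ 1 := by
  have h := abs_real_inner_le_norm a b
  rw [ha, hb, mul_one] at h
  exact abs_le.1 h

private lemma arccos_antitone {x y : ℝ} (h : x ≤ y) : Real.arccos y ≤ Real.arccos x := by
  unfold Real.arccos
  have := Real.monotone_arcsin h
  linarith

private lemma norm_proj_perp {a b : F} (ha : ‖a‖ = 1) (hb : ‖b‖ = 1) (r : ℝ)
    (hr : r = ⟪a, b⟫) : ‖a - r • b‖ = Real.sqrt (1 - r ^ 2) := by
  have hbb : ⟪b, b⟫ = (1 : ℝ) := by rw [real_inner_self_eq_norm_sq, hb]; norm_num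
  have haa : ⟪a, a⟫ = (1 : ℝ) := by rw [real_inner_self_eq_norm_sq, ha]; norm_num
  have hba : ⟪b, a⟫ = r := by rw [real_inner_comm, ← hr]
  have h2 : ‖a - r • b‖ ^ 2 = 1 - r ^ 2 := by
    rw [← real_inner_self_eq_norm_sq]
    simp only [inner_sub_left, inner_sub_right, real_inner_smul_left, real_inner_smul_right,
      hbb, haa, hba, ← hr]
    ring
  rw [← h2, Real.sqrt_sq (norm_nonneg _)]

private lemma inner_key {a b c : F} (ha : ‖a‖ = 1) (hb : ‖b‖ = 1) (hc : ‖c‖ = 1) :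
    ⟪a - ⟪a, b⟫ • b, c - ⟪b, c⟫ • b⟫ = ⟪a, c⟫ - ⟪a, b⟫ * ⟪b, c⟫ := by
  simp only [inner_sub_left, inner_sub_right, real_inner_smul_left, real_inner_smul_right,
    real_inner_self_eq_norm_sq, hb]
  rw [real_inner_comm b a]
  ring

/-- Spherical triangle inequality for unit vectors. -/
private lemma sph_tri {a b c : F} (ha : ‖a‖ = 1) (hb : ‖b‖ = 1) (hc : ‖c‖ = 1) :
    Real.arccos ⟪a, c⟫ ≤ Real.arccos ⟪a, b⟫ + Real.arccos ⟪b, c⟫ := by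
  set t := ⟪a, b⟫ with htdef
  set s := ⟪b, c⟫ with hsdef
  obtain ⟨ht1, ht2⟩ := inner_unit_mem_Icc ha hb
  obtain ⟨hs1, hs2⟩ := inner_unit_mem_Icc hb hc
  have hcos : Real.cos (Real.arccos t + Real.arccos s)
      = t * s - Real.sqrt (1 - t ^ 2) * Real.sqrt (1 - s ^ 2) := by
    rw [Real.cos_add, Real.cos_arccos ht1 ht2, Real.cos_arccos hs1 hs2,
      Real.sin_arccos, Real.sin_arccos]
  have hCS : -(‖a - t • b‖ * ‖c - s • b‖) ≤ ⟪a - t • b, c - s • b⟫ :=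
    neg_le_of_abs_le (abs_real_inner_le_norm _ _)
  rw [inner_key ha hb hc, norm_proj_perp ha hb t htdef,
    norm_proj_perp hc hb s (by rw [hsdef, real_inner_comm])] at hCS
  have hge : Real.cos (Real.arccos t + Real.arccos s) ≤ ⟪a, c⟫ := by
    rw [hcos]; linarith
  rcases le_or_gt (Real.arccos t + Real.arccos s) π with hle | hgt
  · have h0 : 0 ≤ Real.arccos t + Real.arccos s := by
      have := Real.arccos_nonneg t; have := Real.arccos_nonneg s; linarith
    calc Real.arccos ⟪a, c⟫ ≤ Real.arccos (Real.cos (Real.arccos t + Real.arccos s)) :=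
          arccos_antitone hge
      _ = Real.arccos t + Real.arccos s := Real.arccos_cos h0 hle
  · exact (Real.arccos_le_pi _).trans hgt.le

/-- Equality case of the spherical triangle inequality: the middle point determines
that the third point lies in the span of the first two (provided `a ≠ b`). -/
private lemma sph_eq {a b c : F} (ha : ‖a‖ = 1) (hb : ‖b‖ = 1) (hc : ‖c‖ = 1)
    (hab : a ≠ b)
    (h : Real.arccos ⟪a, c⟫ = Real.arccos ⟪a, b⟫ + Real.arccos ⟪b, c⟫) :
    c ∈ Submodule.span ℝ ({a, b} : Set F) := by
  set t := ⟪a, b⟫ with htdef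
  set s := ⟪b, c⟫ with hsdef
  obtain ⟨ht1, ht2⟩ := inner_unit_mem_Icc ha hb
  obtain ⟨hs1, hs2⟩ := inner_unit_mem_Icc hb hc
  obtain ⟨hac1, hac2⟩ := inner_unit_mem_Icc ha hc
  have haS : a ∈ Submodule.span ℝ ({a, b} : Set F) :=
    Submodule.subset_span (Set.mem_insert _ _)
  have hbS : b ∈ Submodule.span ℝ ({a, b} : Set F) :=
    Submodule.subset_span (Set.mem_insert_of_mem _ rfl)
  -- ⟪a, c⟫ = cos (arccos t + arccos s)
  have hcosac : ⟪a, c⟫ = Real.cos (Real.arccos t + Real.arccos s) := by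
    rw [← h, Real.cos_arccos hac1 hac2]
  have hcos : Real.cos (Real.arccos t + Real.arccos s)
      = t * s - Real.sqrt (1 - t ^ 2) * Real.sqrt (1 - s ^ 2) := by
    rw [Real.cos_add, Real.cos_arccos ht1 ht2, Real.cos_arccos hs1 hs2,
      Real.sin_arccos, Real.sin_arccos]
  set a' := a - t • b with ha'def
  set c' := c - s • b with hc'def
  have hinner : ⟪a', c'⟫ = -(‖a'‖ * ‖c'‖) := by
    rw [ha'def, hc'def, inner_key ha hb hc, norm_proj_perp ha hb t htdef,
      norm_proj_perp hc hb s (by rw [hsdef, real_inner_comm]), hcosac, hcos]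
    ring
  by_cases ha' : a' = 0
  · -- a = t • b, so t = ±1
    have hab' : a = t • b := by
      have := sub_eq_zero.1 ha'
      exact this
    have habs : |t| = 1 := by
      have := congrArg norm hab'
      rw [norm_smul, hb, mul_one, ha] at this
      exact this.symm
    rcases abs_eq (by norm_num : (0:ℝ) ≤ 1) |>.1 habs with h1 | h1
    · exact absurd (by rw [hab', h1, one_smul]) hab
    · -- t = -1, so arccos t = π, forcing arccos s = 0, s = 1, c = b
      have hat : Real.arccos t = π := by rw [h1, Real.arccos_neg_one]
      have hs0 : Real.arccos s = 0 := by
        have h1' := Real.arccos_le_pi ⟪a, c⟫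
        have h2' := Real.arccos_nonneg s
        rw [h, hat] at h1'
        linarith
      have hs1' : s = 1 := le_antisymm hs2 (Real.arccos_eq_zero.1 hs0)
      have : ‖c‖ • b = ‖b‖ • c := by
        apply inner_eq_norm_mul_iff_real.1
        rw [← hsdef, hs1', hb, hc, mul_one]
      rw [hb, hc, one_smul, one_smul] at this
      rw [← this]
      exact hbS
  · -- a' ≠ 0 : Cauchy-Schwarz equality gives c' parallel to a'
    have hpar : ‖-c'‖ • a' = ‖a'‖ • (-c') := by
      apply inner_eq_norm_mul_iff_real.1
      rw [inner_neg_right, hinner, norm_neg]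
      ring
    rw [norm_neg, smul_neg] at hpar
    have hc'eq : c' = (-(‖c'‖ / ‖a'‖)) • a' := by
      have hna : ‖a'‖ ≠ 0 := norm_ne_zero_iff.2 ha'
      have key : (-(‖c'‖ / ‖a'‖)) • a' = c' := by
        rw [neg_smul, div_eq_inv_mul, mul_smul, hpar, smul_neg, neg_neg, inv_smul_smul₀ hna]
      exact key.symm
    have hceq : c = (-(‖c'‖ / ‖a'‖)) • a' + s • b := by
      rw [← hc'eq, hc'def]; abel
    rw [hceq]
    refine Submodule.add_mem _ (Submodule.smul_mem _ _ ?_) (Submodule.smul_mem _ _ hbS)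
    rw [ha'def]
    exact Submodule.sub_mem _ haS (Submodule.smul_mem _ _ hbS)

/-- The chain lemma: if equality holds in the polygonal geodesic estimate along a chain
of unit vectors, all the points lie in a subspace of dimension at most 2. -/
private lemma chain (N : ℕ) (q : ℕ → F) (hn : ∀ i, ‖q i‖ = 1)
    (heq : ∑ i ∈ Finset.range N, Real.arccos ⟪q i, q (i + 1)⟫ = Real.arccos ⟪q 0, q N⟫) :
    ∃ S : Submodule ℝ F, Module.finrank ℝ S ≤ 2 ∧ ∀ i ≤ N, q i ∈ S := by
  classical
  set d : ℕ → ℝ := fun i => Real.arccos ⟪q i, q (i + 1)⟫ with hddef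
  have hd0 : ∀ i, 0 ≤ d i := fun i => Real.arccos_nonneg _
  have hself : ∀ i, ⟪q i, q i⟫ = (1 : ℝ) := by
    intro i; rw [real_inner_self_eq_norm_sq, hn, one_pow]
  have gen : ∀ a b : ℕ, a ≤ b →
      Real.arccos ⟪q a, q b⟫ ≤ ∑ i ∈ Finset.Ico a b, d i := by
    intro a b hab
    induction b, hab using Nat.le_induction with
    | base => simp [hself a, hn, Real.arccos_one]
    | succ b hab ih =>
      rw [Finset.sum_Ico_succ_top (by omega : a ≤ b)]
      have := sph_tri (hn a) (hn b) (hn (b + 1))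
      linarith
  have hA : ∀ j ≤ N, Real.arccos ⟪q 0, q j⟫ = ∑ i ∈ Finset.range j, d i := by
    intro j hj
    have h1 := gen 0 j (Nat.zero_le _)
    have h2 := gen j N hj
    have h3 := sph_tri (hn 0) (hn j) (hn N)
    rw [Nat.Ico_zero_eq_range] at h1
    have hsplit : ∑ i ∈ Finset.range j, d i + ∑ i ∈ Finset.Ico j N, d i
        = ∑ i ∈ Finset.range N, d i := by
      simp only [← Nat.Ico_zero_eq_range]
      exact Finset.sum_Ico_consecutive _ (Nat.zero_le _) hj
    have heq' : ∑ i ∈ Finset.range N, d i = Real.arccos ⟪q 0, q N⟫ := heq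
    linarith
  have hstep : ∀ j < N,
      Real.arccos ⟪q 0, q (j + 1)⟫ = Real.arccos ⟪q 0, q j⟫ + d j := by
    intro j hj
    rw [hA j hj.le, hA (j + 1) hj, Finset.sum_range_succ]
  have hrank2 : ∀ x y : F, Module.finrank ℝ (Submodule.span ℝ ({x, y} : Set F)) ≤ 2 := by
    intro x y
    refine (finrank_span_le_card _).trans ?_
    rw [Set.toFinset_insert, Set.toFinset_singleton]
    exact (Finset.card_insert_le _ _).trans (by simp)
  by_cases hall : ∀ i ≤ N, ∃ r : ℝ, q i = r • q 0
  · refine ⟨Submodule.span ℝ ({q 0, q 0} : Set F), hrank2 _ _, fun i hi => ?_⟩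
    obtain ⟨r, hr⟩ := hall i hi
    rw [hr]
    exact Submodule.smul_mem _ _ (Submodule.subset_span (Set.mem_insert _ _))
  · push_neg at hall
    obtain ⟨i₀, hi₀N, hi₀⟩ := hall
    have hex : ∃ i, i ≤ N ∧ ∀ r : ℝ, q i ≠ r • q 0 := ⟨i₀, hi₀N, hi₀⟩
    set k := Nat.find hex with hkdef
    obtain ⟨hkN, hkq⟩ := Nat.find_spec hex
    have hmin : ∀ i < k, i ≤ N → ∃ r : ℝ, q i = r • q 0 := by
      intro i hik hiN
      by_contra hcon
      push_neg at hcon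
      exact Nat.find_min hex hik ⟨hiN, hcon⟩
    set S := Submodule.span ℝ ({q 0, q k} : Set F) with hSdef
    have hq0S : q 0 ∈ S := Submodule.subset_span (Set.mem_insert _ _)
    have hqkS : q k ∈ S := Submodule.subset_span (Set.mem_insert_of_mem _ rfl)
    have hq0k : ⟪q 0, q k⟫ < 1 := by
      rcases lt_or_eq_of_le (inner_unit_mem_Icc (hn 0) (hn k)).2 with h | h
      · exact h
      · exfalso
        have : ‖q k‖ • q 0 = ‖q 0‖ • q k := by
          apply inner_eq_norm_mul_iff_real.1
          rw [h, hn, hn, mul_one]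
        rw [hn, hn, one_smul, one_smul] at this
        exact hkq 1 (by rw [one_smul]; exact this.symm)
    have hkpos : 0 < Real.arccos ⟪q 0, q k⟫ := Real.arccos_pos.2 hq0k
    refine ⟨S, hrank2 _ _, ?_⟩
    intro i
    induction i with
    | zero => exact fun _ => hq0S
    | succ j ih =>
      intro hjN
      by_cases hjk : j + 1 ≤ k
      · rcases lt_or_eq_of_le hjk with hlt | heqk
        · obtain ⟨r, hr⟩ := hmin (j + 1) hlt hjN
          rw [hr]
          exact Submodule.smul_mem _ _ hq0S
        · rw [heqk]; exact hqkS
      · have hkj : k ≤ j := by omega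
        have hjN' : j ≤ N := by omega
        have hqjS : q j ∈ S := ih hjN'
        have hne : q 0 ≠ q j := by
          intro hcontra
          have e1 : Real.arccos ⟪q 0, q j⟫ = 0 := by
            rw [← hcontra, hself 0, Real.arccos_one]
          have e2 := hA j hjN'
          have e3 := hA k hkN
          have e4 : ∑ i ∈ Finset.range k, d i ≤ ∑ i ∈ Finset.range j, d i :=
            Finset.sum_le_sum_of_subset_of_nonneg
              (Finset.range_subset_range.2 hkj) (fun i _ _ => hd0 i)
          linarith
        have hmem := sph_eq (hn 0) (hn j) (hn (j + 1)) hne (hstep j (by omega))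
        have hsub : Submodule.span ℝ ({q 0, q j} : Set F) ≤ S := by
          rw [Submodule.span_le]
          rintro x (rfl | rfl)
          · exact hq0S
          · exact hqjS
        exact hsub hmem

end Aux

private noncomputable def qAux {n : ℕ} (N : ℕ) (p : Fin (N + 1) → EuclideanSpace ℝ (Fin n))
    (i : ℕ) : EuclideanSpace ℝ (Fin n) :=
  ((-1 : ℝ) ^ i) • p ⟨min i N, by omega⟩

private lemma qAux_eq {n : ℕ} (N : ℕ) (p : Fin (N + 1) → EuclideanSpace ℝ (Fin n))
    (i : ℕ) (h : i ≤ N) (j : Fin (N + 1)) (hj : (j : ℕ) = i) :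
    qAux N p i = ((-1 : ℝ) ^ i) • p j := by
  unfold qAux
  congr 1
  exact congrArg p (Fin.ext (show min i N = (j : ℕ) by rw [hj]; exact Nat.min_eq_left h))

/-- Spherical geodesic distance between points of the unit sphere `S^{n-1}`,
given as the angle `arccos ⟪p, q⟫` between unit vectors. -/
noncomputable def sphDist {n : ℕ} (p q : EuclideanSpace ℝ (Fin n)) : ℝ :=
  Real.arccos ⟪p, q⟫

/-- If equality holds in the geodesic polygonal path estimate, then all the points
`p₀, …, p_{2m}` lie on a common great circle, i.e. in a linear subspace of
dimension at most 2. -/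
theorem spherical_polygonal_path_eq_great_circle (m n : ℕ) (hm : 2 ≤ m) (hn : 1 ≤ n)
    (p : Fin (2 * m + 1) → EuclideanSpace ℝ (Fin n))
    (hnorm : ∀ i, ‖p i‖ = 1)
    (θ : ℝ) (hθ : sphDist (p 0) (p (Fin.last (2 * m))) = θ)
    (heq : ∑ i : Fin (2 * m), sphDist (p i.castSucc) (p i.succ) = 2 * m * π - θ) :
    ∃ S : Submodule ℝ (EuclideanSpace ℝ (Fin n)),
      Module.finrank ℝ S ≤ 2 ∧ ∀ i, p i ∈ S := by
  have hqnorm : ∀ i, ‖qAux (2 * m) p i‖ = 1 := by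
    intro i
    unfold qAux
    rw [norm_smul]
    simp [hnorm]
  have hterm : ∀ i : Fin (2 * m),
      Real.arccos ⟪qAux (2 * m) p (i : ℕ), qAux (2 * m) p ((i : ℕ) + 1)⟫
        = π - sphDist (p i.castSucc) (p i.succ) := by
    intro i
    rw [qAux_eq (2 * m) p (i : ℕ) (le_of_lt i.isLt) i.castSucc rfl,
      qAux_eq (2 * m) p ((i : ℕ) + 1) i.isLt i.succ rfl]
    rw [real_inner_smul_left, real_inner_smul_right, ← mul_assoc]
    have hpow : ((-1 : ℝ)) ^ (i : ℕ) * (-1 : ℝ) ^ ((i : ℕ) + 1) = -1 := by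
      rw [← pow_add]
      exact Odd.neg_one_pow ⟨(i : ℕ), by ring⟩
    rw [hpow]
    have : (-1 : ℝ) * ⟪p i.castSucc, p i.succ⟫ = -⟪p i.castSucc, p i.succ⟫ := by ring
    rw [this, Real.arccos_neg]
    rfl
  have hq0 : qAux (2 * m) p 0 = p 0 := by
    rw [qAux_eq (2 * m) p 0 (Nat.zero_le _) 0 rfl, pow_zero, one_smul]
  have hqN : qAux (2 * m) p (2 * m) = p (Fin.last (2 * m)) := by
    rw [qAux_eq (2 * m) p (2 * m) le_rfl (Fin.last (2 * m)) rfl,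
      Even.neg_one_pow ⟨m, by omega⟩, one_smul]
  have hfin : ∑ i ∈ Finset.range (2 * m),
      Real.arccos ⟪qAux (2 * m) p i, qAux (2 * m) p (i + 1)⟫
      = Real.arccos ⟪qAux (2 * m) p 0, qAux (2 * m) p (2 * m)⟫ := by
    rw [← Fin.sum_univ_eq_sum_range
      (fun i : ℕ => Real.arccos ⟪qAux (2 * m) p i, qAux (2 * m) p (i + 1)⟫) (2 * m)]
    have hL : ∑ i : Fin (2 * m),
        Real.arccos ⟪qAux (2 * m) p (i : ℕ), qAux (2 * m) p ((i : ℕ) + 1)⟫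
        = ∑ i : Fin (2 * m), (π - sphDist (p i.castSucc) (p i.succ)) :=
      Finset.sum_congr rfl fun i _ => hterm i
    rw [hL, Finset.sum_sub_distrib, heq, Finset.sum_const, Finset.card_univ,
      Fintype.card_fin, nsmul_eq_mul]
    rw [hq0, hqN]
    have : Real.arccos ⟪p 0, p (Fin.last (2 * m))⟫ = θ := hθ
    rw [this]
    push_cast
    ring
  obtain ⟨S, hS2, hSmem⟩ := chain (2 * m) (qAux (2 * m) p) hqnorm hfin
  refine ⟨S, hS2, fun i => ?_⟩
  have hiN : (i : ℕ) ≤ 2 * m := by omega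
  have hqi : qAux (2 * m) p (i : ℕ) = ((-1 : ℝ)) ^ (i : ℕ) • p i :=
    qAux_eq (2 * m) p (i : ℕ) hiN i rfl
  have hpi : p i = ((-1 : ℝ)) ^ (i : ℕ) • qAux (2 * m) p (i : ℕ) := by
    rw [hqi, smul_smul, ← pow_add, Even.neg_one_pow ⟨(i : ℕ), by ring⟩, one_smul]
  rw [hpi]
  exact Submodule.smul_mem _ _ (hSmem _ hiN)
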